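/- Let G = (V,E) be a directed mixed graph and A, B, C ⊆ V, with B = {β₁,…,β_k}. Let G(B) be the B-history version of G, with node set V ⊔ B^p where B^p = {β₁^p,…,β_k^p}, whose subgraph on V equals G, with an edge α↔β_i^p whenever α↔β_i in G and an edge α→β_i^p whenever α→β_i in G (for α ∈ V, β_i ∈ B). Then B is μ-separated from A given C in G if and only if B^p and A∖C are m-separated by C in G(B). -/

import Mathlib

/-!
Directed mixed graphs (DMGs) with μ-separation, following
Mogensen & Hansen, "Markov equivalence of marginalized local independence graphs".
-/

universe u

/-- A directed mixed graph on node set `V`: a set of directed edges (`dir a b`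
meaning `a → b`) and a set of bidirected edges (`bi`, a symmetric relation since
bidirected edges are unordered pairs).  Loops are allowed. -/
structure DMG (V : Type u) where
  dir : V → V → Prop
  bi : V → V → Prop
  bi_symm : ∀ a b, bi a b → bi b a

namespace DMG

variable {V : Type u}

/-- A single step of a walk: an edge instance together with the direction in
which it is traversed (this records, in particular, orientations of loops).
A directed edge has a tail at its source and a head at its target; a bidirected
edge has heads at both endpoints. -/
inductive Step (G : DMG V) : V → V → Type u
  | dirF : ∀ {a b : V}, G.dir a b → Step G a b
  | dirB : ∀ {a b : V}, G.dir b a → Step G a b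
  | bid  : ∀ {a b : V}, G.bi a b → Step G a b

/-- Whether the step has a head (edge mark) at its start node. -/
def Step.headStart {G : DMG V} : ∀ {a b : V}, Step G a b → Bool
  | _, _, .dirF _ => false
  | _, _, .dirB _ => true
  | _, _, .bid _ => true

/-- Whether the step has a head (edge mark) at its end node. -/
def Step.headEnd {G : DMG V} : ∀ {a b : V}, Step G a b → Bool
  | _, _, .dirF _ => true
  | _, _, .dirB _ => false
  | _, _, .bid _ => true

/-- The step traverses a bidirected edge. -/
def Step.IsBid {G : DMG V} {a b : V} : Step G a b → Prop
  | .bid _ => True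
  | _ => False

/-- The step traverses a directed edge, forwards. -/
def Step.IsDirF {G : DMG V} {a b : V} : Step G a b → Prop
  | .dirF _ => True
  | _ => False

/-- The underlying edge of a step: a directed edge is the ordered pair
(tail, head); a bidirected edge is the unordered pair of its endpoints. -/
def Step.edge {G : DMG V} : ∀ {a b : V}, Step G a b → (V × V) ⊕ (Sym2 V)
  | a, b, .dirF _ => Sum.inl (a, b)
  | a, b, .dirB _ => Sum.inl (b, a)
  | a, b, .bid _ => Sum.inr s(a, b)

/-- A walk in a DMG: an alternating sequence of nodes and edges, each edge
between its neighbouring nodes, with a chosen orientation of each edge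
(in particular of each directed loop). -/
inductive Walk (G : DMG V) : V → V → Type u
  | nil (a : V) : Walk G a a
  | cons {a b c : V} (s : Step G a b) (w : Walk G b c) : Walk G a c

namespace Walk

variable {G : DMG V}

/-- A nontrivial walk contains at least one edge. -/
def Nontrivial : ∀ {a b : V}, Walk G a b → Prop
  | _, _, .nil _ => False
  | _, _, .cons _ _ => True

/-- The list of nodes of a walk, in order (with multiplicity). -/
def nodes : ∀ {a b : V}, Walk G a b → List V
  | a, _, .nil _ => [a]
  | a, _, .cons _ w => a :: w.nodes

/-- The non-endpoint (internal) nodes of a walk, in order (with multiplicity). -/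
def interior {a b : V} (w : Walk G a b) : List V :=
  (w.nodes.dropLast).drop 1

/-- The list of edges of a walk. -/
def edges : ∀ {a b : V}, Walk G a b → List ((V × V) ⊕ (Sym2 V))
  | _, _, .nil _ => []
  | _, _, .cons s w => s.edge :: w.edges

/-- Whether the first edge of the walk has a head at the first node
(`false` for a trivial walk). -/
def firstHead : ∀ {a b : V}, Walk G a b → Bool
  | _, _, .nil _ => false
  | _, _, .cons s _ => s.headStart

/-- Whether the last edge of the walk has a head at the last node
(`false` for a trivial walk). -/
def lastHead : ∀ {a b : V}, Walk G a b → Bool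
  | _, _, .nil _ => false
  | _, _, .cons s (.nil _) => s.headEnd
  | _, _, .cons _ (.cons t w) => lastHead (Walk.cons t w)

/-- Helper: conditions at all remaining internal node instances of a walk,
where `h` records whether the edge arriving at the current start node has a
head there.  A node instance is a collider if both adjoining edges have a
head at it; a collider must lie in `Anc`, a noncollider must avoid `C`. -/
def openFrom (C Anc : Set V) : ∀ {a b : V}, Bool → Walk G a b → Prop
  | _, _, _, .nil _ => True
  | a, _, h, .cons s w =>
      (if h && s.headStart then a ∈ Anc else a ∉ C) ∧ openFrom C Anc s.headEnd w

/-- Helper: every remaining internal node instance which is a collider lies in `S`. -/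
def collInFrom (S : Set V) : ∀ {a b : V}, Bool → Walk G a b → Prop
  | _, _, _, .nil _ => True
  | a, _, h, .cons s w =>
      ((h && s.headStart) = true → a ∈ S) ∧ collInFrom S s.headEnd w

/-- Every collider (internal node instance with heads on both sides) of the
walk lies in `S`. -/
def CollidersIn (S : Set V) : ∀ {a b : V}, Walk G a b → Prop
  | _, _, .nil _ => True
  | _, _, .cons s w => collInFrom S s.headEnd w

/-- The walk has no colliders. -/
def NoColliders {a b : V} (w : Walk G a b) : Prop :=
  w.CollidersIn ∅

/-- Helper: every remaining internal node instance is a collider. -/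
def allCollFrom : ∀ {a b : V}, Bool → Walk G a b → Prop
  | _, _, _, .nil _ => True
  | _, _, h, .cons s w => (h && s.headStart) = true ∧ allCollFrom s.headEnd w

/-- Every internal node instance of the walk is a collider (no noncolliders). -/
def AllColliders : ∀ {a b : V}, Walk G a b → Prop
  | _, _, .nil _ => True
  | _, _, .cons s w => allCollFrom s.headEnd w

/-- Every edge of the walk is bidirected. -/
def AllBid : ∀ {a b : V}, Walk G a b → Prop
  | _, _, .nil _ => True
  | _, _, .cons s w => s.IsBid ∧ w.AllBid

/-- The walk consists of a directed first edge (pointing forwards) followed by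
bidirected edges only (the form `α → β` or `α → γ₁ ↔ ⋯ ↔ γₙ ↔ β`). -/
def UniForm : ∀ {a b : V}, Walk G a b → Prop
  | _, _, .nil _ => False
  | _, _, .cons s w => s.IsDirF ∧ w.AllBid

end Walk

/-- `a` is an ancestor of `b`: there is a (possibly trivial) directed path
from `a` to `b`. -/
def anc (G : DMG V) (a b : V) : Prop := Relation.ReflTransGen G.dir a b

/-- The set of ancestors of nodes of `C`. -/
def anSet (G : DMG V) (C : Set V) : Set V := {a | ∃ c ∈ C, G.anc a c}

/-- The walk is μ-connecting given `C`: it is nontrivial, its first node is not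
in `C`, every collider lies in `An(C)`, no noncollider lies in `C`, and its
final edge has a head at the final node. -/
def Walk.MuConn {G : DMG V} (C : Set V) : ∀ {a b : V}, Walk G a b → Prop
  | _, _, .nil _ => False
  | a, _, .cons s w =>
      a ∉ C ∧ Walk.openFrom C (G.anSet C) s.headEnd w ∧ (Walk.cons s w).lastHead = true

/-- `B` is μ-separated from `A` given `C` in `G`: there is no μ-connecting
walk from any node of `A` to any node of `B` given `C`. -/
def muSep (G : DMG V) (A B C : Set V) : Prop :=
  ∀ ⦃a b : V⦄, a ∈ A → b ∈ B → ∀ w : Walk G a b, ¬ w.MuConn C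

/-- Two DMGs on the same node set are Markov equivalent: they induce the same
independence model via μ-separation, i.e. `I(G₁) = I(G₂)`. -/
def MarkovEq (G₁ G₂ : DMG V) : Prop :=
  ∀ A B C : Set V, muSep G₁ A B C ↔ muSep G₂ A B C

/-- `b` is separable from `a` in `I(G)`: there is `C ⊆ V ∖ {a}` with
`⟨{a},{b} | C⟩ ∈ I(G)`. -/
def separable (G : DMG V) (a b : V) : Prop :=
  ∃ C : Set V, a ∉ C ∧ muSep G {a} {b} C

/-- `a ∈ u(b, I(G))`: `b` is inseparable from `a` in `I(G)`. -/
def inU (G : DMG V) (a b : V) : Prop := ¬ G.separable a b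

/-- `G₁` is a subgraph of `G₂` (same node set, edge-set inclusion). -/
def Sub (G₁ G₂ : DMG V) : Prop :=
  (∀ a b, G₁.dir a b → G₂.dir a b) ∧ (∀ a b, G₁.bi a b → G₂.bi a b)

/-- The DMG obtained by adding the directed edge `a → b`. -/
def addDir (G : DMG V) (a b : V) : DMG V where
  dir x y := G.dir x y ∨ (x = a ∧ y = b)
  bi := G.bi
  bi_symm := G.bi_symm

/-- The DMG obtained by adding the bidirected edge `a ↔ b`. -/
def addBi (G : DMG V) (a b : V) : DMG V where
  dir := G.dir
  bi x y := G.bi x y ∨ (x = a ∧ y = b) ∨ (x = b ∧ y = a)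
  bi_symm x y h := by
    rcases h with h | h | h
    · exact Or.inl (G.bi_symm _ _ h)
    · exact Or.inr (Or.inr ⟨h.2, h.1⟩)
    · exact Or.inr (Or.inl ⟨h.2, h.1⟩)

/-- The DMG obtained by removing the directed edge `a → b`. -/
def removeDir (G : DMG V) (a b : V) : DMG V where
  dir x y := G.dir x y ∧ ¬(x = a ∧ y = b)
  bi := G.bi
  bi_symm := G.bi_symm

/-- The DMG obtained by removing the bidirected edge `a ↔ b`. -/
def removeBi (G : DMG V) (a b : V) : DMG V where
  dir := G.dir
  bi x y := G.bi x y ∧ ¬((x = a ∧ y = b) ∨ (x = b ∧ y = a))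
  bi_symm x y h := ⟨G.bi_symm _ _ h.1, fun hc => h.2 (by tauto)⟩

/-- The complete DMG: all directed and all bidirected edges present. -/
def IsComplete (G : DMG V) : Prop :=
  (∀ a b, G.dir a b) ∧ (∀ a b, G.bi a b)

/-- A DMG is maximal if it is complete, or adding any (absent) edge changes the
induced independence model. -/
def IsMaximal (G : DMG V) : Prop :=
  G.IsComplete ∨
    ∀ a b : V, (¬ G.dir a b → ¬ MarkovEq (G.addDir a b) G) ∧
      (¬ G.bi a b → ¬ MarkovEq (G.addBi a b) G)

end DMG
namespace DMG

variable {V : Type u}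

/-- An inducing path from `a` to `b`: a nontrivial path or cycle from `a` to
`b` with a head at `b`, with no noncolliders, and on which every node is an
ancestor of `a` or of `b`. -/
def IsInducingPath (G : DMG V) {a b : V} (w : Walk G a b) : Prop :=
  w.Nontrivial ∧
  (w.nodes.Nodup ∨ (a = b ∧ w.nodes.dropLast.Nodup)) ∧
  w.lastHead = true ∧
  w.AllColliders ∧
  ∀ x ∈ w.nodes, G.anc x a ∨ G.anc x b

/-- A bidirected inducing path: an inducing path all of whose edges are bidirected. -/
def IsBidirectedIP (G : DMG V) {a b : V} (w : Walk G a b) : Prop :=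
  G.IsInducingPath w ∧ w.AllBid

/-- A directed inducing path: an inducing path of the form `α → β` or
`α → γ₁ ↔ ⋯ ↔ γₙ ↔ β` with every `γᵢ` an ancestor of `β`. -/
def IsDirectedIP (G : DMG V) {a b : V} (w : Walk G a b) : Prop :=
  G.IsInducingPath w ∧ w.UniForm ∧ ∀ x ∈ w.interior, G.anc x b

/-- There exists a nontrivial walk in `G` between `x` and `y` with no
colliders, all non-endpoint nodes in `M`, and with edge marks `hs` at `x`
(`true` = head) and `he` at `y`. -/
def ConnThrough (G : DMG V) (M : Set V) (x y : V) (hs he : Bool) : Prop :=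
  ∃ w : Walk G x y, w.Nontrivial ∧ w.NoColliders ∧
    (∀ z ∈ w.interior, z ∈ M) ∧ w.firstHead = hs ∧ w.lastHead = he

/-- The latent projection `m(G, O)` of `G` on `O`: the DMG on node set `O`
having an edge (with given endpoint marks) between `α` and `β` if and only if
`G` contains a nontrivial endpoint-identical walk between `α` and `β` with no
colliders and all non-endpoint nodes in `M = V ∖ O`. -/
def latentProj (G : DMG V) (O : Set V) : DMG {x : V // x ∈ O} where
  dir x y := ConnThrough G Oᶜ x.1 y.1 false true
  bi x y := ConnThrough G Oᶜ x.1 y.1 true true ∨ ConnThrough G Oᶜ y.1 x.1 true true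
  bi_symm x y h := h.symm

/-- `x` is directedly collider-connected to `b`: there is a nontrivial walk
from `x` to `b` with a head at `b` on which every non-endpoint node is a
collider. -/
def dirCollConn (G : DMG V) (x b : V) : Prop :=
  ∃ w : Walk G x b, w.Nontrivial ∧ w.AllColliders ∧ w.lastHead = true

/-- The set `D(a,b)` of nodes in `An({a,b})` directedly collider-connected to
`b`, except `a`. -/
def Dset (G : DMG V) (a b : V) : Set V :=
  {x | x ∈ G.anSet {a, b} ∧ G.dirCollConn x b} \ {a}

/-- `a` and `b` are potential siblings in the independence model `I(G)`. -/
def PotSib (G : DMG V) (a b : V) : Prop :=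
  (G.inU b a ∧ G.inU a b) ∧
  (∀ (γ : V) (C : Set V), b ∈ C → muSep G {γ} {a} C → muSep G {γ} {b} C) ∧
  (∀ (γ : V) (C : Set V), a ∈ C → muSep G {γ} {b} C → muSep G {γ} {a} C)

/-- `a` is a potential parent of `b` in the independence model `I(G)`. -/
def PotPar (G : DMG V) (a b : V) : Prop :=
  G.inU a b ∧
  (∀ (γ : V) (C : Set V), a ∉ C → muSep G {γ} {b} C → muSep G {γ} {a} C) ∧
  (∀ (γ δ : V) (C : Set V), a ∉ C → b ∈ C →
    muSep G {γ} {δ} C → muSep G {γ} {b} C ∨ muSep G {a} {δ} C) ∧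
  (∀ (γ : V) (C : Set V), a ∉ C → muSep G {b} {γ} C → muSep G {b} {γ} (C ∪ {a}))

/-- The graph `N(I(G))`: directed edge `a → b` present iff `a` is a potential
parent of `b` in `I(G)`, bidirected edge `a ↔ b` present iff `a` and `b` are
potential siblings in `I(G)` (potential siblinghood is symmetric). -/
def NGraph (G : DMG V) : DMG V where
  dir a b := G.PotPar a b
  bi a b := G.PotSib a b ∨ G.PotSib b a
  bi_symm _ _ h := h.symm

/-- A path is m-connecting given `C` if it is a path (no repeated nodes), no
noncollider on it is in `C` and every collider on it is in `An(C)`. -/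
def Walk.MConn {G : DMG V} (C : Set V) : ∀ {a b : V}, Walk G a b → Prop
  | _, _, .nil _ => True
  | _, _, .cons s w =>
      (Walk.cons s w).nodes.Nodup ∧ Walk.openFrom C (G.anSet C) s.headEnd w

/-- `A` and `B` are m-separated by `C`: there is no m-connecting path between
a node of `A` and a node of `B` given `C`. -/
def mSep (G : DMG V) (A B C : Set V) : Prop :=
  ∀ ⦃a b : V⦄, a ∈ A → b ∈ B →
    (∀ w : Walk G a b, ¬ w.MConn C) ∧ (∀ w : Walk G b a, ¬ w.MConn C)

/-- Auxiliary directed-edge relation of the `B`-history version of `G`. -/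
def histDir (G : DMG V) (B : Set V) : (V ⊕ {x : V // x ∈ B}) → (V ⊕ {x : V // x ∈ B}) → Prop
  | .inl u, .inl v => G.dir u v
  | .inl u, .inr v => G.dir u v.1
  | _, _ => False

/-- Auxiliary bidirected-edge relation of the `B`-history version of `G`. -/
def histBi (G : DMG V) (B : Set V) : (V ⊕ {x : V // x ∈ B}) → (V ⊕ {x : V // x ∈ B}) → Prop
  | .inl u, .inl v => G.bi u v
  | .inl u, .inr v => G.bi u v.1
  | .inr u, .inl v => G.bi u.1 v
  | .inr _, .inr _ => False

/-- The `B`-history version `G(B)` of `G`: node set `V ⊔ Bᵖ`, whose subgraph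
on `V` is `G`, with additionally `α ↔ βᵖ` whenever `α ↔ β` in `G` and
`α → βᵖ` whenever `α → β` in `G` (for `α ∈ V`, `β ∈ B`). -/
def hist (G : DMG V) (B : Set V) : DMG (V ⊕ {x : V // x ∈ B}) where
  dir := G.histDir B
  bi := G.histBi B
  bi_symm x y h := by
    cases x <;> cases y <;>
      simp only [histBi] at h ⊢ <;>
      first
        | exact G.bi_symm _ _ h
        | exact h

end DMG
namespace DMG

section Aux

variable {α : Type u} {H : DMG α}

theorem ite_and_comm {p q : Bool} {X Y : Prop}
    (h : if (p && q) = true then X else Y) : if (q && p) = true then X else Y := by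
  cases p <;> cases q <;> simpa using h

namespace Step

/-- Reverse a step. -/
def symm : ∀ {a b : α}, Step H a b → Step H b a
  | _, _, .dirF h => .dirB h
  | _, _, .dirB h => .dirF h
  | _, _, .bid h => .bid (H.bi_symm _ _ h)

@[simp] theorem headStart_symm {a b : α} (s : Step H a b) :
    s.symm.headStart = s.headEnd := by cases s <;> rfl

@[simp] theorem headEnd_symm {a b : α} (s : Step H a b) :
    s.symm.headEnd = s.headStart := by cases s <;> rfl

end Step

namespace Walk

/-- Concatenation of walks. -/
def append : ∀ {a b c : α}, Walk H a b → Walk H b c → Walk H a c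
  | _, _, _, .nil _, w2 => w2
  | _, _, _, .cons s w, w2 => .cons s (w.append w2)

theorem nodes_eq_cons : ∀ {a b : α} (w : Walk H a b), w.nodes = a :: w.nodes.tail
  | _, _, .nil _ => rfl
  | _, _, .cons _ _ => rfl

theorem nodes_append : ∀ {a b c : α} (w1 : Walk H a b) (w2 : Walk H b c),
    (w1.append w2).nodes = w1.nodes ++ w2.nodes.tail
  | _, _, _, .nil _, w2 => by
    simp [append, nodes]; exact nodes_eq_cons w2
  | _, _, _, .cons s w, w2 => by
    simp [append, nodes, nodes_append w w2]

/-- The mark with which a walk "arrives" at its final node, where `h` is the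
incoming mark at its first node (used as the value for the trivial walk). -/
def arr : ∀ {a b : α}, Bool → Walk H a b → Bool
  | _, _, h, .nil _ => h
  | _, _, _, .cons s w => arr s.headEnd w

theorem arr_eq_lastHead : ∀ {a b : α} (w : Walk H a b) (h : Bool), w.Nontrivial →
    arr h w = w.lastHead
  | _, _, .cons s (.nil _), h, _ => rfl
  | _, _, .cons s (.cons t w), h, _ => by
    show arr s.headEnd (.cons t w) = _
    rw [arr_eq_lastHead (.cons t w) s.headEnd trivial]
    rfl

theorem openFrom_append {C Anc : Set α} :
    ∀ {a b c : α} (w1 : Walk H a b) (w2 : Walk H b c) (h : Bool),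
      openFrom C Anc h (w1.append w2) →
      openFrom C Anc h w1 ∧ openFrom C Anc (arr h w1) w2
  | _, _, _, .nil _, w2, h => fun hyp => ⟨trivial, hyp⟩
  | _, _, _, .cons s w, w2, h => fun hyp => by
    obtain ⟨h1, h2⟩ := hyp
    obtain ⟨h3, h4⟩ := openFrom_append w w2 s.headEnd h2
    exact ⟨⟨h1, h3⟩, h4⟩

theorem exists_split {x : α} : ∀ {a b : α} (w : Walk H a b), x ∈ w.nodes →
    ∃ (w1 : Walk H a x) (w2 : Walk H x b), w = w1.append w2
  | a, _, .nil _, hx => by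
    simp [nodes] at hx
    subst hx
    exact ⟨.nil _, .nil _, rfl⟩
  | a, b, .cons s w, hx => by
    rcases List.mem_cons.mp hx with h | h
    · subst h
      exact ⟨.nil _, .cons s w, rfl⟩
    · obtain ⟨w1, w2, rfl⟩ := exists_split w h
      exact ⟨.cons s w1, w2, rfl⟩

/-- Internal-node openness: `openFrom` conditions ignoring the first node. -/
def IntOpen (C Anc : Set α) : ∀ {a b : α}, Walk H a b → Prop
  | _, _, .nil _ => True
  | _, _, .cons s w => openFrom C Anc s.headEnd w

theorem intOpen_of_openFrom {C Anc : Set α} :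
    ∀ {a b : α} (w : Walk H a b) (h : Bool), openFrom C Anc h w → IntOpen C Anc w
  | _, _, .nil _, _, _ => trivial
  | _, _, .cons s w, _, hyp => hyp.2

/-- Reversal with an accumulator. -/
def revAux : ∀ {a b c : α}, Walk H a b → Walk H a c → Walk H b c
  | _, _, _, .nil _, acc => acc
  | _, _, _, .cons s w, acc => revAux w (.cons s.symm acc)

theorem revAux_nontrivial : ∀ {a b c : α} (w : Walk H a b) (acc : Walk H a c),
    acc.Nontrivial → (revAux w acc).Nontrivial
  | _, _, _, .nil _, acc, h => h
  | _, _, _, .cons s w, acc, _ => revAux_nontrivial w (.cons s.symm acc) trivial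

theorem lastHead_cons_of_nontrivial {a b c : α} (s : Step H a b) (w : Walk H b c)
    (hw : w.Nontrivial) : (Walk.cons s w).lastHead = w.lastHead := by
  cases w with
  | nil => exact hw.elim
  | cons t w => rfl

theorem revAux_lastHead : ∀ {a b c : α} (w : Walk H a b) (acc : Walk H a c),
    acc.Nontrivial → (revAux w acc).lastHead = acc.lastHead
  | _, _, _, .nil _, acc, _ => rfl
  | _, _, _, .cons s w, acc, h => by
    rw [show revAux (.cons s w) acc = revAux w (.cons s.symm acc) from rfl,
      revAux_lastHead w (.cons s.symm acc) trivial,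
      lastHead_cons_of_nontrivial s.symm acc h]

theorem revAux_open {C Anc : Set α} :
    ∀ {a b : α} (w : Walk H a b), IntOpen C Anc w → b ∉ C →
      ∀ {c : α} (acc : Walk H a c), openFrom C Anc w.firstHead acc →
      openFrom C Anc false (revAux w acc)
  | _, _, .nil _, _, _, _, acc, hacc => hacc
  | _, _, .cons s w, hint, hb, _, acc, hacc => by
    have hint' : openFrom C Anc s.headEnd w := hint
    have hacc' : openFrom C Anc s.headStart acc := hacc
    show openFrom C Anc false (revAux w (.cons s.symm acc))
    refine revAux_open w ?_ hb (.cons s.symm acc) ?_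
    · exact intOpen_of_openFrom w s.headEnd hint'
    · show openFrom C Anc w.firstHead (.cons s.symm acc)
      refine ⟨?_, ?_⟩
      · cases w with
        | nil =>
          show if (false && s.symm.headStart) = true then _ else _ ∉ C
          simpa using hb
        | cons t w' =>
          have := hint'.1
          show if ((Walk.cons t w').firstHead && s.symm.headStart) = true then _ else _
          simp only [Step.headStart_symm, firstHead]
          rwa [Bool.and_comm]
      · simpa using hacc'

/-- The chase lemma: from a node entered with a head, following the walk either
reaches a collider (hence a node of `Anc` reachable by a directed path), or
traverses a directed path all the way to the end, arriving with a head. -/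
theorem chase {C Anc : Set α} : ∀ {y z : α} (w : Walk H y z),
    openFrom C Anc true w →
    (∃ m, Relation.ReflTransGen H.dir y m ∧ m ∈ Anc) ∨
      (Relation.ReflTransGen H.dir y z ∧ (w.Nontrivial → w.lastHead = true))
  | _, _, .nil _, _ => Or.inr ⟨Relation.ReflTransGen.refl, fun h => h.elim⟩
  | y, z, .cons s w, hyp => by
    obtain ⟨h1, h2⟩ := hyp
    cases s with
    | dirF hd =>
      rcases chase w h2 with ⟨m, rtg, hm⟩ | ⟨rtg, hl⟩
      · exact Or.inl ⟨m, rtg.head hd, hm⟩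
      · refine Or.inr ⟨rtg.head hd, fun _ => ?_⟩
        cases w with
        | nil => rfl
        | cons t w' =>
          show (Walk.cons t w').lastHead = true
          exact hl trivial
    | dirB hd =>
      refine Or.inl ⟨y, Relation.ReflTransGen.refl, ?_⟩
      simpa [Step.headStart] using h1
    | bid hd =>
      refine Or.inl ⟨y, Relation.ReflTransGen.refl, ?_⟩
      simpa [Step.headStart] using h1

theorem nodes_length_pos : ∀ {a b : α} (w : Walk H a b), 0 < w.nodes.length := by
  intro a b w
  rw [nodes_eq_cons w]
  simp

theorem rtg_closed {Anc : Set α} (hcl : ∀ ⦃x m : α⦄, H.dir x m → m ∈ Anc → x ∈ Anc)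
    {x m : α} (rtg : Relation.ReflTransGen H.dir x m) (hm : m ∈ Anc) : x ∈ Anc := by
  induction rtg with
  | refl => exact hm
  | tail _ hd ih => exact ih (hcl hd hm)

/-- Any open walk can be shortened to an open path with the same endpoints. -/
theorem shorten {C Anc : Set α} (hcl : ∀ ⦃x m : α⦄, H.dir x m → m ∈ Anc → x ∈ Anc) :
    ∀ (n : ℕ) {a b : α} (h : Bool) (w : Walk H a b), w.nodes.length ≤ n →
      openFrom C Anc h w →
      ∃ p : Walk H a b, (∀ z ∈ p.nodes, z ∈ w.nodes) ∧ p.nodes.Nodup ∧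
        openFrom C Anc h p := by
  intro n
  induction n with
  | zero =>
    intro a b h w hlen
    exact absurd hlen (by have := nodes_length_pos w; omega)
  | succ n ih =>
    intro a b h w hlen hopen
    cases w with
    | nil => exact ⟨.nil _, fun z hz => hz, List.nodup_singleton a, trivial⟩
    | cons s w' =>
      by_cases hmem : a ∈ w'.nodes
      · -- jump to a later occurrence of `a`
        obtain ⟨w2, w3, rfl⟩ := exists_split w' hmem
        obtain ⟨h1, h2⟩ := hopen
        obtain ⟨h3, h4⟩ := openFrom_append w2 w3 s.headEnd h2
        -- `h4 : openFrom C Anc (arr s.headEnd w2) w3`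
        have hopen3 : openFrom C Anc h w3 := by
          cases w3 with
          | nil => trivial
          | cons s3 w3' =>
            refine ⟨?_, h4.2⟩
            by_cases hb : (h && s3.headStart) = true
            · rw [if_pos hb]
              by_cases hb2 : ((arr s.headEnd w2) && s3.headStart) = true
              · have := h4.1
                rwa [if_pos hb2] at this
              · -- bad case: use the chase
                have hh : h = true := by
                  cases h
                  · simp at hb
                  · rfl
                have hs3 : s3.headStart = true := by
                  cases hs : s3.headStart
                  · rw [hs] at hb; simp at hb
                  · rfl
                have harr : arr s.headEnd w2 = false := by
                  cases harr : arr s.headEnd w2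
                  · rfl
                  · rw [harr, hs3] at hb2; simp at hb2
                cases s with
                | dirF hd =>
                  rcases chase w2 h3 with ⟨m, rtg, hm⟩ | ⟨rtg, hl⟩
                  · exact rtg_closed hcl (rtg.head hd) hm
                  · exfalso
                    cases w2 with
                    | nil => simp [arr, Step.headEnd] at harr
                    | cons t w2' =>
                      have := hl trivial
                      rw [arr_eq_lastHead (.cons t w2') (Step.dirF hd).headEnd trivial]
                        at harr
                      rw [this] at harr
                      simp at harr
                | dirB hd =>
                  have := h1
                  rw [hh] at this
                  simpa [Step.headStart] using this
                | bid hd =>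
                  have := h1
                  rw [hh] at this
                  simpa [Step.headStart] using this
            · rw [if_neg hb]
              by_cases hb2 : ((arr s.headEnd w2) && s3.headStart) = true
              · -- then `h = false`, use the condition at the first node
                have hh : h = false := by
                  cases hh : h
                  · rfl
                  · exfalso
                    apply hb
                    rw [hh]
                    cases hs : s3.headStart
                    · rw [hs] at hb2; simp at hb2
                    · rfl
                have := h1
                rw [hh] at this
                simpa using this
              · have := h4.1
                rwa [if_neg hb2] at this
        have hlen3 : w3.nodes.length ≤ n := by
          have e1 : (Walk.cons s (w2.append w3)).nodes.length
              = 1 + (w2.nodes.length + w3.nodes.tail.length) := by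
            simp [nodes, nodes_append]
            omega
          have e2 : w3.nodes.length = w3.nodes.tail.length + 1 := by
            rw [nodes_eq_cons w3]; simp
          have e3 : 0 < w2.nodes.length := nodes_length_pos w2
          omega
        obtain ⟨p, hsub, hnd, hop⟩ := ih h w3 hlen3 hopen3
        refine ⟨p, ?_, hnd, hop⟩
        intro z hz
        have hz3 : z ∈ w3.nodes := hsub z hz
        rw [nodes_eq_cons w3] at hz3
        rcases List.mem_cons.mp hz3 with h | h
        · subst h; exact List.mem_cons_self
        · apply List.mem_cons_of_mem
          rw [nodes_append]
          exact List.mem_append_right _ h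
      · -- first node does not repeat
        have hlen' : w'.nodes.length ≤ n := by
          have : (Walk.cons s w').nodes.length = w'.nodes.length + 1 := by
            simp [nodes]
          omega
        obtain ⟨p, hsub, hnd, hop⟩ := ih s.headEnd w' hlen' hopen.2
        refine ⟨.cons s p, ?_, ?_, hopen.1, hop⟩
        · intro z hz
          rcases List.mem_cons.mp hz with h | h
          · subst h; exact List.mem_cons_self
          · exact List.mem_cons_of_mem _ (hsub z h)
        · exact List.nodup_cons.mpr ⟨fun hc => hmem (hsub a hc), hnd⟩

theorem muConn_of_parts {C : Set α} : ∀ {a b : α} (w : Walk H a b),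
    w.Nontrivial → a ∉ C → Walk.openFrom C (H.anSet C) false w →
    w.lastHead = true → w.MuConn C
  | _, _, .nil _, hnt, _, _, _ => hnt.elim
  | _, _, .cons _ _, _, ha, ho, hl => ⟨ha, ho.2, hl⟩

end Walk

end Aux

section Hist

variable {V : Type u} {G : DMG V} {B : Set V}

/-- Projection of the node set of `G(B)` back to `V`. -/
def prj (B : Set V) : V ⊕ {x : V // x ∈ B} → V := Sum.elim id Subtype.val

theorem hist_dir_closed {C' : Set (V ⊕ {x : V // x ∈ B})}
    : ∀ ⦃x m⦄, (G.hist B).dir x m → m ∈ (G.hist B).anSet C' → x ∈ (G.hist B).anSet C' :=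
  fun _ _ hd ⟨c, hc, r⟩ => ⟨c, hc, r.head hd⟩

theorem step_headEnd_inr : ∀ {x : V ⊕ {z : V // z ∈ B}} {v : {z : V // z ∈ B}}
    (s : Step (G.hist B) x (.inr v)), s.headEnd = true
  | .inl _, v, .dirF _ => rfl
  | .inr _, v, .dirF hd => hd.elim
  | .inl _, v, .dirB hd => hd.elim
  | .inr _, v, .dirB hd => hd.elim
  | .inl _, v, .bid _ => rfl
  | .inr _, v, .bid hd => hd.elim

theorem step_headStart_inr : ∀ {y : V ⊕ {z : V // z ∈ B}} {v : {z : V // z ∈ B}}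
    (s : Step (G.hist B) (.inr v) y), s.headStart = true
  | .inl _, v, .dirF hd => hd.elim
  | .inr _, v, .dirF hd => hd.elim
  | .inl _, v, .dirB _ => rfl
  | .inr _, v, .dirB hd => hd.elim
  | .inl _, v, .bid _ => rfl
  | .inr _, v, .bid hd => hd.elim

/-- Project a step of `G(B)` to a step of `G`. -/
def projStep : ∀ {x y : V ⊕ {z : V // z ∈ B}}, Step (G.hist B) x y →
    Step G (prj B x) (prj B y)
  | .inl _, .inl _, .dirF hd => .dirF hd
  | .inl _, .inr _, .dirF hd => .dirF hd
  | .inr _, .inl _, .dirF hd => hd.elim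
  | .inr _, .inr _, .dirF hd => hd.elim
  | .inl _, .inl _, .dirB hd => .dirB hd
  | .inr _, .inl _, .dirB hd => .dirB hd
  | .inl _, .inr _, .dirB hd => hd.elim
  | .inr _, .inr _, .dirB hd => hd.elim
  | .inl _, .inl _, .bid hd => .bid hd
  | .inl _, .inr _, .bid hd => .bid hd
  | .inr _, .inl _, .bid hd => .bid hd
  | .inr _, .inr _, .bid hd => hd.elim

theorem projStep_headStart : ∀ {x y : V ⊕ {z : V // z ∈ B}}
    (s : Step (G.hist B) x y), (projStep s).headStart = s.headStart
  | .inl _, .inl _, .dirF hd => rfl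
  | .inl _, .inr _, .dirF hd => rfl
  | .inr _, .inl _, .dirF hd => hd.elim
  | .inr _, .inr _, .dirF hd => hd.elim
  | .inl _, .inl _, .dirB hd => rfl
  | .inr _, .inl _, .dirB hd => rfl
  | .inl _, .inr _, .dirB hd => hd.elim
  | .inr _, .inr _, .dirB hd => hd.elim
  | .inl _, .inl _, .bid hd => rfl
  | .inl _, .inr _, .bid hd => rfl
  | .inr _, .inl _, .bid hd => rfl
  | .inr _, .inr _, .bid hd => hd.elim

theorem projStep_headEnd : ∀ {x y : V ⊕ {z : V // z ∈ B}}
    (s : Step (G.hist B) x y), (projStep s).headEnd = s.headEnd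
  | .inl _, .inl _, .dirF hd => rfl
  | .inl _, .inr _, .dirF hd => rfl
  | .inr _, .inl _, .dirF hd => hd.elim
  | .inr _, .inr _, .dirF hd => hd.elim
  | .inl _, .inl _, .dirB hd => rfl
  | .inr _, .inl _, .dirB hd => rfl
  | .inl _, .inr _, .dirB hd => hd.elim
  | .inr _, .inr _, .dirB hd => hd.elim
  | .inl _, .inl _, .bid hd => rfl
  | .inl _, .inr _, .bid hd => rfl
  | .inr _, .inl _, .bid hd => rfl
  | .inr _, .inr _, .bid hd => hd.elim

/-- Project a walk of `G(B)` to a walk of `G`. -/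
def projW : ∀ {x y : V ⊕ {z : V // z ∈ B}}, Walk (G.hist B) x y →
    Walk G (prj B x) (prj B y)
  | _, _, .nil x => .nil (prj B x)
  | _, _, .cons s w => .cons (projStep s) (projW w)

/-- Ancestry in `G(B)` ending at a node of `V` comes from ancestry in `G`. -/
theorem hist_anc_inl : ∀ {x : V ⊕ {z : V // z ∈ B}} {c : V},
    Relation.ReflTransGen (G.hist B).dir x (.inl c) →
    ∃ u, x = .inl u ∧ Relation.ReflTransGen G.dir u c := by
  intro x c h
  refine Relation.ReflTransGen.head_induction_on h
    ⟨c, rfl, Relation.ReflTransGen.refl⟩ ?_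
  intro x' y hd hrtg ih
  obtain ⟨u, rfl, r⟩ := ih
  cases x' with
  | inl w => exact ⟨w, rfl, r.head hd⟩
  | inr w => exact hd.elim

theorem mem_anSet_hist_inl {C : Set V} {u : V}
    (h : (Sum.inl u : V ⊕ {z : V // z ∈ B}) ∈ (G.hist B).anSet (Sum.inl '' C)) :
    u ∈ G.anSet C := by
  obtain ⟨c', ⟨c, hc, rfl⟩, rtg⟩ := h
  obtain ⟨u', he, r⟩ := hist_anc_inl rtg
  injection he with he
  exact ⟨c, hc, by rw [he]; exact r⟩

theorem not_mem_anSet_hist_inr {C : Set V} {v : {z : V // z ∈ B}} :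
    (Sum.inr v : V ⊕ {z : V // z ∈ B}) ∉ (G.hist B).anSet (Sum.inl '' C) := by
  rintro ⟨c', ⟨c, hc, rfl⟩, rtg⟩
  obtain ⟨u, he, -⟩ := hist_anc_inl rtg
  cases he

theorem mem_anSet_hist_of {C : Set V} {u : V} (h : u ∈ G.anSet C) :
    (Sum.inl u : V ⊕ {z : V // z ∈ B}) ∈ (G.hist B).anSet (Sum.inl '' C) := by
  obtain ⟨c, hc, r⟩ := h
  refine ⟨.inl c, ⟨c, hc, rfl⟩, ?_⟩
  exact Relation.ReflTransGen.lift (p := (G.hist B).dir) Sum.inl (fun a b hab => hab) _ _ r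

/-- Projecting an open walk of `G(B)` yields an open walk of `G`. -/
theorem proj_open {C : Set V} : ∀ {x y : V ⊕ {z : V // z ∈ B}} (h : Bool)
    (w : Walk (G.hist B) x y),
    Walk.openFrom (Sum.inl '' C) ((G.hist B).anSet (Sum.inl '' C)) h w →
    (∀ v, x = Sum.inr v → h = true) →
    Walk.openFrom C (G.anSet C) h (projW w)
  | _, _, _, .nil _, _, _ => trivial
  | x, _, h, .cons s w, hyp, hside => by
    obtain ⟨h1, h2⟩ := hyp
    refine ⟨?_, ?_⟩
    · rw [projStep_headStart]
      cases x with
      | inl u =>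
        by_cases hb : (h && s.headStart) = true
        · rw [if_pos hb]
          rw [if_pos hb] at h1
          exact mem_anSet_hist_inl h1
        · rw [if_neg hb]
          rw [if_neg hb] at h1
          exact fun hc => h1 ⟨u, hc, rfl⟩
      | inr v =>
        exfalso
        have hh : h = true := hside v rfl
        have hs : s.headStart = true := step_headStart_inr s
        rw [if_pos (by rw [hh, hs]; rfl)] at h1
        exact not_mem_anSet_hist_inr h1
    · rw [projStep_headEnd]
      refine proj_open s.headEnd w h2 ?_
      rintro v rfl
      exact step_headEnd_inr s

theorem projW_lastHead : ∀ {x y : V ⊕ {z : V // z ∈ B}} (w : Walk (G.hist B) x y),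
    (projW w).lastHead = w.lastHead
  | _, _, .nil _ => rfl
  | _, _, .cons s (.nil _) => projStep_headEnd s
  | _, _, .cons s (.cons t w) => by
    show (Walk.cons (projStep s) (Walk.cons (projStep t) (projW w))).lastHead = _
    show (Walk.cons (projStep t) (projW w)).lastHead
      = (Walk.cons t w).lastHead
    exact projW_lastHead (.cons t w)

theorem lastHead_to_inr : ∀ {x : V ⊕ {z : V // z ∈ B}} {v : {z : V // z ∈ B}}
    (w : Walk (G.hist B) x (.inr v)), w.Nontrivial → w.lastHead = true
  | _, _, .cons s (.nil _), _ => step_headEnd_inr s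
  | _, _, .cons s (.cons t w), _ => lastHead_to_inr (.cons t w) trivial
  | _, _, .nil _, h => h.elim

/-- Lift a step of `G` to a step of `G(B)` between the `V`-copies. -/
def liftStep : ∀ {x y : V}, Step G x y → Step (G.hist B) (.inl x) (.inl y)
  | _, _, .dirF hd => .dirF hd
  | _, _, .dirB hd => .dirB hd
  | _, _, .bid hd => .bid hd

theorem liftStep_headStart {x y : V} (s : Step G x y) :
    (liftStep (B := B) s).headStart = s.headStart := by cases s <;> rfl

theorem liftStep_headEnd {x y : V} (s : Step G x y) :
    (liftStep (B := B) s).headEnd = s.headEnd := by cases s <;> rfl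

variable {b : V} (hb : b ∈ B)

/-- Lift the final step (which has a head at its end) to a step into `bᵖ`. -/
def liftLast : ∀ {x : V} (s : Step G x b), s.headEnd = true →
    Step (G.hist B) (.inl x) (.inr ⟨b, hb⟩)
  | _, .dirF hd, _ => Step.dirF (b := (Sum.inr ⟨b, hb⟩ : V ⊕ {z : V // z ∈ B})) hd
  | _, .dirB _, he => nomatch he
  | _, .bid hd, _ => Step.bid (b := (Sum.inr ⟨b, hb⟩ : V ⊕ {z : V // z ∈ B})) hd

theorem liftLast_headStart : ∀ {x : V} (s : Step G x b) (he : s.headEnd = true),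
    (liftLast hb s he).headStart = s.headStart
  | _, .dirF hd, _ => rfl
  | _, .dirB _, he => nomatch he
  | _, .bid hd, _ => rfl

/-- Lift a walk of `G` ending with a head at `b ∈ B` to a walk of `G(B)`
ending at `bᵖ`. -/
def liftW : ∀ {x : V} (w : Walk G x b), w.lastHead = true →
    Walk (G.hist B) (.inl x) (.inr ⟨b, hb⟩)
  | _, .nil _, hl => nomatch hl
  | _, .cons s (.nil _), hl => .cons (liftLast hb s hl) (.nil _)
  | _, .cons s (.cons t w), hl => .cons (liftStep s) (liftW (.cons t w) hl)

theorem liftW_open {C : Set V} : ∀ {x : V} (w : Walk G x b) (hl : w.lastHead = true)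
    (h : Bool), Walk.openFrom C (G.anSet C) h w →
    Walk.openFrom (Sum.inl '' C) ((G.hist B).anSet (Sum.inl '' C)) h (liftW hb w hl)
  | _, .nil _, hl, _, _ => nomatch hl
  | x, .cons s (.nil _), hl, h, hyp => by
    obtain ⟨h1, -⟩ := hyp
    simp only [liftW]
    refine ⟨?_, trivial⟩
    rw [liftLast_headStart hb s hl]
    by_cases hc : (h && s.headStart) = true
    · rw [if_pos hc] at h1 ⊢
      exact mem_anSet_hist_of h1
    · rw [if_neg hc] at h1 ⊢
      rintro ⟨u, hu, he⟩
      injection he with he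
      exact h1 (he ▸ hu)
  | x, .cons s (.cons t w), hl, h, hyp => by
    obtain ⟨h1, h2⟩ := hyp
    simp only [liftW]
    refine ⟨?_, ?_⟩
    · rw [liftStep_headStart]
      by_cases hc : (h && s.headStart) = true
      · rw [if_pos hc] at h1 ⊢
        exact mem_anSet_hist_of h1
      · rw [if_neg hc] at h1 ⊢
        rintro ⟨u, hu, he⟩
        injection he with he
        exact h1 (he ▸ hu)
    · rw [liftStep_headEnd]
      exact liftW_open (.cons t w) hl s.headEnd h2

end Hist

end DMG

open DMG in

/-- Proposition 19: `B` is μ-separated from `A` given `C`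
in `G` iff `Bᵖ` and `A ∖ C` are m-separated by `C` in the `B`-history version
`G(B)` of `G`. -/
theorem stmt19 {V : Type u} [Fintype V] (G : DMG V) (A B C : Set V) :
    DMG.muSep G A B C ↔
      DMG.mSep (G.hist B)
        (Set.range (Sum.inr : {x : V // x ∈ B} → V ⊕ {x : V // x ∈ B}))
        (Sum.inl '' (A \ C)) (Sum.inl '' C) := by
  classical
  constructor
  · -- μ-separation implies m-separation in the history version
    intro musep a' b' ha' hb'
    obtain ⟨β, rfl⟩ := ha'
    obtain ⟨a, ⟨haA, haC⟩, rfl⟩ := hb'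
    constructor
    · -- no m-connecting walk from `βᵖ` to `a`
      intro w hM
      cases w with
      | cons s w' =>
        obtain ⟨-, o⟩ := hM
        have oG : Walk.openFrom C (G.anSet C) (projStep s).headEnd (projW w') := by
          rw [projStep_headEnd]
          refine proj_open s.headEnd w' o ?_
          rintro v rfl
          cases s with
          | dirF hd => exact hd.elim
          | dirB hd => exact hd.elim
          | bid hd => exact hd.elim
        set t := projStep s with ht
        have hacc : Walk.openFrom C (G.anSet C) (projW w').firstHead
            (Walk.cons t.symm (Walk.nil _)) := by
          refine ⟨?_, trivial⟩
          rw [Step.headStart_symm]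
          revert oG
          generalize projW w' = w1
          intro oG
          cases w1 with
          | nil =>
            simp only [Walk.firstHead, Bool.false_and]
            rw [if_neg Bool.false_ne_true]
            exact haC
          | cons u w2 =>
            exact ite_and_comm oG.1
        have orev : Walk.openFrom C (G.anSet C) false
            (Walk.revAux (projW w') (Walk.cons t.symm (Walk.nil _))) :=
          Walk.revAux_open (projW w')
            (Walk.intOpen_of_openFrom (projW w') t.headEnd oG) haC
            (Walk.cons t.symm (Walk.nil _)) hacc
        have hnt : (Walk.revAux (projW w') (Walk.cons t.symm (Walk.nil _))).Nontrivial :=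
          Walk.revAux_nontrivial (projW w') _ trivial
        have hlast : (Walk.revAux (projW w') (Walk.cons t.symm (Walk.nil _))).lastHead
            = true := by
          rw [Walk.revAux_lastHead (projW w') (Walk.cons t.symm (Walk.nil _)) trivial]
          show t.symm.headEnd = true
          rw [Step.headEnd_symm, ht, projStep_headStart]
          exact step_headStart_inr s
        exact musep haA β.2 _ (Walk.muConn_of_parts _ hnt haC orev hlast)
    · -- no m-connecting walk from `a` to `βᵖ`
      intro w hM
      cases w with
      | cons s w' =>
        obtain ⟨-, o⟩ := hM
        have oG : Walk.openFrom C (G.anSet C) (projStep s).headEnd (projW w') := by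
          rw [projStep_headEnd]
          refine proj_open s.headEnd w' o ?_
          rintro v rfl
          exact step_headEnd_inr s
        have hl : (Walk.cons (projStep s) (projW w')).lastHead = true :=
          (projW_lastHead (Walk.cons s w')).trans
            (lastHead_to_inr (Walk.cons s w') trivial)
        exact musep haA β.2 (Walk.cons (projStep s) (projW w')) ⟨haC, oG, hl⟩
  · -- m-separation in the history version implies μ-separation
    intro msep a b ha hb w hmu
    cases w with
    | nil => exact hmu
    | cons s w' =>
      obtain ⟨haC, o, hl⟩ := hmu
      have o0 : Walk.openFrom C (G.anSet C) false (Walk.cons s w') := by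
        refine ⟨?_, o⟩
        simp only [Bool.false_and]
        rw [if_neg Bool.false_ne_true]
        exact haC
      have olift := liftW_open hb (Walk.cons s w') hl false o0
      obtain ⟨p, -, hnd, hop⟩ :=
        Walk.shorten hist_dir_closed
          (liftW hb (Walk.cons s w') hl).nodes.length false
          (liftW hb (Walk.cons s w') hl) le_rfl olift
      refine (msep ⟨⟨b, hb⟩, rfl⟩ ⟨a, ⟨ha, haC⟩, rfl⟩).2 p ?_
      cases p with
      | cons s1 p' => exact ⟨hnd, hop.2⟩
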